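/- (Asymptotics used in the proof of Theorem 2.) The function x ↦ ω'(x)e^x satisfies the linear equation (ω'(x)e^x)'' − 2ω(x)(ω'(x)e^x) = 0 for all x ∈ ℝ, and there exists a constant C ≠ 0 such that ω'(x) e^x e^{−√2 x} → C as x → −∞; in particular z ↦ ω'(z)² e^{2z} is integrable on every half-line (−∞, y]. -/

import Mathlib

open Filter Asymptotics MeasureTheory intervalIntegral Set

namespace Stmt18Aux

structure Hyp (ω : ℝ → ℝ) : Prop where
  smooth : ContDiff ℝ 2 ω
  eq : ∀ x, deriv (deriv ω) x + 2 * deriv ω x + ω x - (ω x) ^ 2 = 0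
  bot : Tendsto ω atBot (nhds 1)
  top : Tendsto ω atTop (nhds 0)
  half : ω 0 = 1 / 2
  dneg : ∀ x, deriv ω x < 0

noncomputable def V (ω : ℝ → ℝ) (x : ℝ) : ℝ := deriv ω x * Real.exp x
noncomputable def V1 (ω : ℝ → ℝ) (x : ℝ) : ℝ := (ω x ^ 2 - ω x - deriv ω x) * Real.exp x

variable {ω : ℝ → ℝ}

lemma Hyp.dom (h : Hyp ω) : Differentiable ℝ ω :=
  h.smooth.differentiable (by norm_num)

lemma Hyp.dom' (h : Hyp ω) : Differentiable ℝ (deriv ω) := by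
  have h2 : ContDiff ℝ (1 + 1 : WithTop ℕ∞) ω := by
    have : ((2 : ℕ) : WithTop ℕ∞) = 1 + 1 := by norm_num
    exact this ▸ h.smooth
  have := (contDiff_succ_iff_deriv.mp h2).2.2
  exact this.differentiable one_ne_zero

lemma Hyp.d2 (h : Hyp ω) (x : ℝ) :
    deriv (deriv ω) x = ω x ^ 2 - ω x - 2 * deriv ω x := by
  have := h.eq x; linarith

lemma Hyp.hasV (h : Hyp ω) (x : ℝ) : HasDerivAt (V ω) (V1 ω x) x := by
  have hx := ((h.dom' x).hasDerivAt).mul (Real.hasDerivAt_exp x)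
  have : deriv (deriv ω) x * Real.exp x + deriv ω x * Real.exp x = V1 ω x := by
    rw [h.d2 x]; unfold V1; ring
  exact this ▸ hx

lemma Hyp.hasV1 (h : Hyp ω) (x : ℝ) : HasDerivAt (V1 ω) (2 * ω x * V ω x) x := by
  have hin : HasDerivAt (fun y => ω y ^ 2 - ω y - deriv ω y)
      (2 * ω x ^ 1 * deriv ω x - deriv ω x - deriv (deriv ω) x) x :=
    ((((h.dom x).hasDerivAt).pow 2).sub ((h.dom x).hasDerivAt)).sub ((h.dom' x).hasDerivAt)
  have hx := hin.mul (Real.hasDerivAt_exp x)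
  have : (2 * ω x ^ 1 * deriv ω x - deriv ω x - deriv (deriv ω) x) * Real.exp x
      + (ω x ^ 2 - ω x - deriv ω x) * Real.exp x = 2 * ω x * V ω x := by
    rw [h.d2 x]; unfold V; ring
  exact this ▸ hx

lemma Hyp.derivV (h : Hyp ω) : deriv (V ω) = V1 ω :=
  funext fun x => (h.hasV x).deriv

lemma Hyp.part1 (h : Hyp ω) (x : ℝ) :
    deriv (deriv (fun y => deriv ω y * Real.exp y)) x = 2 * ω x * (deriv ω x * Real.exp x) := by
  have : (fun y => deriv ω y * Real.exp y) = V ω := rfl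
  rw [this, h.derivV, (h.hasV1 x).deriv]; rfl

lemma Hyp.anti (h : Hyp ω) : StrictAnti ω := strictAnti_of_deriv_neg h.dneg

lemma Hyp.lt_one (h : Hyp ω) (x : ℝ) : ω x < 1 := by
  have h1 : ω (x - 1) ≤ 1 := by
    have : ∀ᶠ y in atBot, ω y ≥ ω (x - 1) := by
      filter_upwards [eventually_le_atBot (x - 1)] with y hy
      exact (h.anti.antitone hy)
    exact ge_of_tendsto h.bot (by filter_upwards [this] with y hy using hy)
  exact lt_of_lt_of_le (h.anti (by linarith)) h1

lemma Hyp.pos (h : Hyp ω) (x : ℝ) : 0 < ω x := by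
  have h1 : 0 ≤ ω (x + 1) := by
    have : ∀ᶠ y in atTop, ω y ≤ ω (x + 1) := by
      filter_upwards [eventually_ge_atTop (x + 1)] with y hy
      exact h.anti.antitone hy
    exact le_of_tendsto h.top this
  exact lt_of_le_of_lt h1 (h.anti (by linarith))

lemma Hyp.Vneg (h : Hyp ω) (x : ℝ) : V ω x < 0 :=
  mul_neg_of_neg_of_pos (h.dneg x) (Real.exp_pos x)

lemma Hyp.V1anti (h : Hyp ω) : StrictAnti (V1 ω) := by
  apply strictAnti_of_deriv_neg
  intro x
  rw [(h.hasV1 x).deriv]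
  exact mul_neg_of_pos_of_neg (by have := h.pos x; linarith) (h.Vneg x)

lemma Hyp.derivω_eq (h : Hyp ω) (x : ℝ) : deriv ω x = V ω x * Real.exp (-x) := by
  unfold V; rw [mul_assoc, ← Real.exp_add]; simp

lemma Hyp.V1neg (h : Hyp ω) (x2 : ℝ) : V1 ω x2 < 0 := by
  by_contra hc
  push_neg at hc
  set X2 := x2 - 1 with hX2
  set δ := V1 ω X2 with hδ
  have hδpos : 0 < δ := lt_of_le_of_lt hc (h.V1anti (by simp [hX2]))
  -- ψ = V - δ x is monotone on Iic X2
  have hd : ∀ x, HasDerivAt (fun y => V ω y - δ * y) (V1 ω x - δ) x := by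
    intro x
    have h2 : HasDerivAt (fun y : ℝ => δ * y) δ x := by
      simpa using (hasDerivAt_id x).const_mul δ
    exact (h.hasV x).sub h2
  have hmono : MonotoneOn (fun x => V ω x - δ * x) (Iic X2) := by
    apply monotoneOn_of_deriv_nonneg (convex_Iic X2)
    · exact Continuous.continuousOn ((h.dom'.continuous.mul Real.continuous_exp).sub
        (continuous_const.mul continuous_id))
    · intro x _
      exact (hd x).differentiableAt.differentiableWithinAt
    · intro x hx
      rw [interior_Iic] at hx
      rw [(hd x).deriv]
      have : δ ≤ V1 ω x := h.V1anti.antitone (le_of_lt hx)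
      linarith
  have hVbound : ∀ x ≤ X2, V ω x ≤ V ω X2 + δ * (x - X2) := by
    intro x hx
    have := hmono (mem_Iic.mpr hx) (mem_Iic.mpr le_rfl) hx
    simp only at this
    nlinarith
  set X := min X2 (X2 + (-1 - V ω X2) / δ) with hX
  have hXle : X ≤ X2 := min_le_left _ _
  have hVle : ∀ x ≤ X, V ω x ≤ -1 := by
    intro x hx
    have h1 : V ω x ≤ V ω X2 + δ * (x - X2) := hVbound x (le_trans hx hXle)
    have h2 : x - X2 ≤ (-1 - V ω X2) / δ := by
      have : x ≤ X2 + (-1 - V ω X2) / δ := le_trans hx (min_le_right _ _)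
      linarith
    have h3 : δ * (x - X2) ≤ -1 - V ω X2 := by
      rw [← le_div_iff₀' hδpos] at *
      linarith [mul_le_mul_of_nonneg_left h2 hδpos.le]
    linarith
  -- now ω + e^{-x} is antitone on Iic X
  have hd2 : ∀ x, HasDerivAt (fun y => ω y - Real.exp (-y)) (deriv ω x + Real.exp (-x)) x := by
    intro x
    have h2 : HasDerivAt (fun y : ℝ => Real.exp (-y)) (-Real.exp (-x)) x := by
      simpa using (hasDerivAt_neg x).exp
    exact ((h.dom x).hasDerivAt.sub h2).congr_deriv (by ring)
  have hanti : AntitoneOn (fun x => ω x - Real.exp (-x)) (Iic X) := by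
    apply antitoneOn_of_deriv_nonpos (convex_Iic X)
    · exact Continuous.continuousOn (h.dom.continuous.sub
        (Real.continuous_exp.comp continuous_neg))
    · intro x _
      exact (hd2 x).differentiableAt.differentiableWithinAt
    · intro x hx
      rw [interior_Iic] at hx
      rw [(hd2 x).deriv]
      have h1 : V ω x ≤ -1 := hVle x hx.le
      have h2 : deriv ω x ≤ -Real.exp (-x) := by
        rw [h.derivω_eq x]
        nlinarith [Real.exp_pos (-x)]
      linarith
  set K := ω X - Real.exp (-X) with hK
  have hK1 : K < 1 := by
    have := h.lt_one X
    have := Real.exp_pos (-X)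
    simp [hK]; linarith
  set x0 := min X (-Real.log (1 - K)) with hx0
  have hx0X : x0 ≤ X := min_le_left _ _
  have hωx0 : ω x0 - Real.exp (-x0) ≥ K := hanti (mem_Iic.mpr hx0X) (mem_Iic.mpr le_rfl) hx0X
  have hexp : Real.exp (-x0) ≥ 1 - K := by
    have h1 : x0 ≤ -Real.log (1 - K) := min_le_right _ _
    have h2 : Real.log (1 - K) ≤ -x0 := by linarith
    calc Real.exp (-x0) ≥ Real.exp (Real.log (1 - K)) := Real.exp_le_exp.mpr h2
      _ = 1 - K := Real.exp_log (by linarith)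
  have : ω x0 ≥ 1 := by linarith
  exact absurd this (not_le.mpr (h.lt_one x0))

lemma Hyp.Vanti (h : Hyp ω) : StrictAnti (V ω) := by
  apply strictAnti_of_deriv_neg
  intro x
  rw [(h.hasV x).deriv]
  exact h.V1neg x

lemma Hyp.V1tendsto (h : Hyp ω) : Tendsto (V1 ω) atBot (nhds 0) := by
  have hbdd : BddAbove (range (V1 ω)) := ⟨0, by rintro _ ⟨x, rfl⟩; exact (h.V1neg x).le⟩
  have htend := tendsto_atBot_ciSup h.V1anti.antitone hbdd
  set m := ⨆ x, V1 ω x with hm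
  have hm0 : m ≤ 0 := ciSup_le fun x => (h.V1neg x).le
  rcases lt_or_eq_of_le hm0 with hmlt | hmeq
  · exfalso
    have hle : ∀ x, V1 ω x ≤ m := fun x => le_ciSup hbdd x
    have hd : ∀ x, HasDerivAt (fun y => V ω y - m * y) (V1 ω x - m) x := by
      intro x
      have h2 : HasDerivAt (fun y : ℝ => m * y) m x := by
        simpa using (hasDerivAt_id x).const_mul m
      exact (h.hasV x).sub h2
    have hanti : Antitone (fun x => V ω x - m * x) := by
      apply antitone_of_deriv_nonpos
      · intro x
        exact (hd x).differentiableAt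
      · intro x
        rw [(hd x).deriv]
        linarith [hle x]
    set x1 := -(V ω 0) / m with hx1
    have hmne : m ≠ 0 := hmlt.ne
    have hx1neg : x1 ≤ 0 := by
      rw [hx1]
      exact div_nonpos_iff.mpr (Or.inl ⟨by linarith [h.Vneg 0], hmlt.le⟩)
    have := hanti hx1neg
    simp only at this
    have hmx : m * x1 = -(V ω 0) := by
      rw [hx1]
      field_simp
    nlinarith [h.Vneg x1]
  · rw [← hmeq]; exact htend

lemma Hyp.Vtendsto (h : Hyp ω) : Tendsto (V ω) atBot (nhds 0) := by
  have hbdd : BddAbove (range (V ω)) := ⟨0, by rintro _ ⟨x, rfl⟩; exact (h.Vneg x).le⟩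
  have htend := tendsto_atBot_ciSup h.Vanti.antitone hbdd
  set l := ⨆ x, V ω x with hl
  have hl0 : l ≤ 0 := ciSup_le fun x => (h.Vneg x).le
  rcases lt_or_eq_of_le hl0 with hllt | hleq
  · exfalso
    have hle : ∀ x, V ω x ≤ l := fun x => le_ciSup hbdd x
    have hd : ∀ x, HasDerivAt (fun y => ω y + l * Real.exp (-y))
        (deriv ω x - l * Real.exp (-x)) x := by
      intro x
      have h2 : HasDerivAt (fun y : ℝ => Real.exp (-y)) (-Real.exp (-x)) x := by
        simpa using (hasDerivAt_neg x).exp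
      have := (h.dom x).hasDerivAt.add (h2.const_mul l)
      exact this.congr_deriv (by ring)
    have hanti : Antitone (fun x => ω x + l * Real.exp (-x)) := by
      apply antitone_of_deriv_nonpos
      · intro x
        exact (hd x).differentiableAt
      · intro x
        rw [(hd x).deriv]
        have h1 : deriv ω x ≤ l * Real.exp (-x) := by
          rw [h.derivω_eq x]
          nlinarith [Real.exp_pos (-x), hle x]
        linarith
    set t := (1 - ω 0 - l) / (-l) with ht
    have htpos : 0 < t := by
      apply div_pos
      · linarith [h.lt_one 0]
      · linarith
    set x0 := min 0 (-Real.log t) with hx0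
    have hx00 : x0 ≤ 0 := min_le_left _ _
    have := hanti hx00
    simp only [neg_zero, Real.exp_zero, mul_one] at this
    have hexp : Real.exp (-x0) ≥ t := by
      have h1 : x0 ≤ -Real.log t := min_le_right _ _
      calc Real.exp (-x0) ≥ Real.exp (Real.log t) := Real.exp_le_exp.mpr (by linarith)
        _ = t := Real.exp_log htpos
    have hlne : (-l) ≠ 0 := ne_of_gt (by linarith)
    have hlt : (-l) * Real.exp (-x0) ≥ 1 - ω 0 - l := by
      have h2 : (-l) * t ≤ (-l) * Real.exp (-x0) :=
        mul_le_mul_of_nonneg_left hexp (by linarith)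
      have h3 : (-l) * t = 1 - ω 0 - l := by
        rw [ht]
        rw [mul_comm, div_mul_cancel₀ _ hlne]
      linarith
    have : ω x0 ≥ 1 := by nlinarith
    exact absurd this (not_le.mpr (h.lt_one x0))
  · rw [← hleq]; exact htend

noncomputable def E (ω : ℝ → ℝ) (x : ℝ) : ℝ := V1 ω x ^ 2 - 2 * ω x * V ω x ^ 2
noncomputable def M (ω : ℝ → ℝ) (x : ℝ) : ℝ :=
  (V1 ω x - Real.sqrt 2 * V ω x) * Real.exp (Real.sqrt 2 * x)

lemma Hyp.hasE (h : Hyp ω) (x : ℝ) :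
    HasDerivAt (E ω) (-2 * deriv ω x * V ω x ^ 2) x := by
  have h1 : HasDerivAt (fun y => V1 ω y ^ 2) (2 * V1 ω x ^ 1 * (2 * ω x * V ω x)) x :=
    (h.hasV1 x).pow 2
  have h2 : HasDerivAt (fun y => 2 * ω y * V ω y ^ 2)
      (2 * deriv ω x * V ω x ^ 2 + 2 * ω x * (2 * V ω x ^ 1 * V1 ω x)) x :=
    (((h.dom x).hasDerivAt).const_mul 2).mul ((h.hasV x).pow 2)
  have := h1.sub h2
  refine this.congr_deriv ?_
  ring

lemma Hyp.Etendsto (h : Hyp ω) : Tendsto (E ω) atBot (nhds 0) := by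
  have h1 : Tendsto (fun x => V1 ω x ^ 2) atBot (nhds (0 ^ 2)) := h.V1tendsto.pow 2
  have h2 : Tendsto (fun x => 2 * ω x * V ω x ^ 2) atBot (nhds (2 * 1 * 0 ^ 2)) :=
    ((tendsto_const_nhds.mul h.bot).mul (h.Vtendsto.pow 2))
  have := h1.sub h2
  norm_num at this
  exact this

lemma Hyp.Enonneg (h : Hyp ω) (x : ℝ) : 0 ≤ E ω x := by
  have hmono : Monotone (E ω) := by
    apply monotone_of_deriv_nonneg
    · intro y; exact (h.hasE y).differentiableAt
    · intro y
      rw [(h.hasE y).deriv]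
      have := h.dneg y
      nlinarith [sq_nonneg (V ω y)]
  apply le_of_tendsto h.Etendsto
  filter_upwards [eventually_le_atBot x] with z hz using hmono hz

lemma Hyp.hasM (h : Hyp ω) (x : ℝ) :
    HasDerivAt (M ω) (2 * (ω x - 1) * V ω x * Real.exp (Real.sqrt 2 * x)) x := by
  have hexp : HasDerivAt (fun y : ℝ => Real.exp (Real.sqrt 2 * y))
      (Real.exp (Real.sqrt 2 * x) * Real.sqrt 2) x := by
    have : HasDerivAt (fun y : ℝ => Real.sqrt 2 * y) (Real.sqrt 2) x := by
      simpa using (hasDerivAt_id x).const_mul (Real.sqrt 2)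
    exact this.exp
  have h1 : HasDerivAt (fun y => V1 ω y - Real.sqrt 2 * V ω y)
      (2 * ω x * V ω x - Real.sqrt 2 * V1 ω x) x :=
    (h.hasV1 x).sub ((h.hasV x).const_mul (Real.sqrt 2))
  have := h1.mul hexp
  refine this.congr_deriv ?_
  have hs : Real.sqrt 2 * Real.sqrt 2 = 2 := Real.mul_self_sqrt (by norm_num)
  linear_combination (-(V ω x * Real.exp (Real.sqrt 2 * x))) * hs

lemma Hyp.Mtendsto (h : Hyp ω) : Tendsto (M ω) atBot (nhds 0) := by
  have h1 : Tendsto (fun x => V1 ω x - Real.sqrt 2 * V ω x) atBot (nhds (0 - Real.sqrt 2 * 0)) :=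
    h.V1tendsto.sub (tendsto_const_nhds.mul h.Vtendsto)
  have h2 : Tendsto (fun x : ℝ => Real.exp (Real.sqrt 2 * x)) atBot (nhds 0) := by
    apply Real.tendsto_exp_atBot.comp
    exact (tendsto_const_mul_atBot_of_pos (by positivity)).mpr tendsto_id
  have := h1.mul h2
  norm_num at this
  exact this

lemma Hyp.Mnonneg (h : Hyp ω) (x : ℝ) : 0 ≤ M ω x := by
  have hmono : Monotone (M ω) := by
    apply monotone_of_deriv_nonneg
    · intro y; exact (h.hasM y).differentiableAt
    · intro y
      rw [(h.hasM y).deriv]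
      have h1 := h.lt_one y
      have h2 := h.Vneg y
      have h3 : 0 < (1 - ω y) * (-V ω y) * Real.exp (Real.sqrt 2 * y) :=
        mul_pos (mul_pos (by linarith) (by linarith)) (Real.exp_pos _)
      nlinarith [h3]
  apply le_of_tendsto h.Mtendsto
  filter_upwards [eventually_le_atBot x] with z hz using hmono hz

lemma Hyp.ratio_ub (h : Hyp ω) (x : ℝ) : V1 ω x / V ω x ≤ Real.sqrt 2 := by
  rw [div_le_iff_of_neg (h.Vneg x)]
  have := h.Mnonneg x
  unfold M at this
  nlinarith [Real.exp_pos (Real.sqrt 2 * x)]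

lemma Hyp.ratio_lb (h : Hyp ω) (x : ℝ) :
    Real.sqrt 2 * Real.sqrt (ω x) ≤ V1 ω x / V ω x := by
  have hV := h.Vneg x
  have hV1 := h.V1neg x
  have hE := h.Enonneg x
  unfold E at hE
  have hb : (0:ℝ) < -(V ω x) := by linarith
  rw [show V1 ω x / V ω x = -V1 ω x / -V ω x from (neg_div_neg_eq _ _).symm, le_div_iff₀ hb]
  by_contra hcon
  push_neg at hcon
  have hsnn : 0 ≤ Real.sqrt 2 * Real.sqrt (ω x) * -V ω x := by positivity
  have hsq : (-V1 ω x) ^ 2 < (Real.sqrt 2 * Real.sqrt (ω x) * -V ω x) ^ 2 := by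
    have h0 : 0 ≤ -V1 ω x := by linarith
    nlinarith
  have h2 : (Real.sqrt 2) ^ 2 = 2 := Real.sq_sqrt (by norm_num)
  have h3 : (Real.sqrt (ω x)) ^ 2 = ω x := Real.sq_sqrt (h.pos x).le
  have h4 : (Real.sqrt 2 * Real.sqrt (ω x) * -V ω x) ^ 2 = 2 * ω x * V ω x ^ 2 := by
    rw [mul_pow, mul_pow, h2, h3]
    ring
  nlinarith

noncomputable def g (ω : ℝ → ℝ) (x : ℝ) : ℝ := Real.log (-V ω x) - Real.sqrt 2 * x
noncomputable def F (ω : ℝ → ℝ) (x : ℝ) : ℝ := -deriv ω x + 2 * (1 - ω x)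

lemma Hyp.Fpos (h : Hyp ω) (x : ℝ) : 0 < F ω x := by
  unfold F
  have := h.dneg x
  have := h.lt_one x
  linarith

lemma Hyp.hasF (h : Hyp ω) (x : ℝ) : HasDerivAt (F ω) (ω x - ω x ^ 2) x := by
  have h1 : HasDerivAt (fun y => (2:ℝ) * (1 - ω y)) (2 * (0 - deriv ω x)) x :=
    ((hasDerivAt_const x (1:ℝ)).sub (h.dom x).hasDerivAt).const_mul 2
  have := ((h.dom' x).hasDerivAt).neg.add h1
  refine this.congr_deriv ?_
  rw [h.d2 x]
  ring

lemma Hyp.hasg (h : Hyp ω) (x : ℝ) :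
    HasDerivAt (g ω) (V1 ω x / V ω x - Real.sqrt 2) x := by
  have hne : -V ω x ≠ 0 := ne_of_gt (by linarith [h.Vneg x])
  have hlog : HasDerivAt (fun y => Real.log (-V ω y)) (-V1 ω x / -V ω x) x :=
    ((h.hasV x).neg).log hne
  have h2 : HasDerivAt (fun y : ℝ => Real.sqrt 2 * y) (Real.sqrt 2) x := by
    simpa using (hasDerivAt_id x).const_mul (Real.sqrt 2)
  have := hlog.sub h2
  rw [neg_div_neg_eq] at this
  exact this

lemma Hyp.g_anti (h : Hyp ω) : Antitone (g ω) := by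
  apply antitone_of_deriv_nonpos
  · intro x; exact (h.hasg x).differentiableAt
  · intro x
    rw [(h.hasg x).deriv]
    have := h.ratio_ub x
    linarith

lemma Hyp.g_le (h : Hyp ω) (x : ℝ) :
    g ω x ≤ g ω 0 + 2 * Real.sqrt 2 * F ω 0 := by
  have hs2 : (0:ℝ) < Real.sqrt 2 := Real.sqrt_pos.mpr (by norm_num)
  rcases le_or_gt x 0 with hx | hx
  · -- G = g + 2√2 F is monotone on Iic 0
    have hGd : ∀ z, HasDerivAt (fun y => g ω y + 2 * Real.sqrt 2 * F ω y)
        ((V1 ω z / V ω z - Real.sqrt 2) + 2 * Real.sqrt 2 * (ω z - ω z ^ 2)) z := by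
      intro z
      exact (h.hasg z).add ((h.hasF z).const_mul (2 * Real.sqrt 2))
    have hGmono : MonotoneOn (fun y => g ω y + 2 * Real.sqrt 2 * F ω y) (Iic 0) := by
      apply monotoneOn_of_deriv_nonneg (convex_Iic 0)
      · exact Continuous.continuousOn (by
          have : ∀ z, DifferentiableAt ℝ (fun y => g ω y + 2 * Real.sqrt 2 * F ω y) z :=
            fun z => (hGd z).differentiableAt
          exact (Differentiable.continuous this))
      · intro z _
        exact (hGd z).differentiableAt.differentiableWithinAt
      · intro z hz
        rw [interior_Iic] at hz
        rw [(hGd z).deriv]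
        have hω2 : (1:ℝ)/2 ≤ ω z := by
          rw [← h.half]
          exact h.anti.antitone hz.le
        have hω1 := h.lt_one z
        have hωp := h.pos z
        have hlb := h.ratio_lb z
        have hsq : ω z ≤ Real.sqrt (ω z) := by
          have h1 : ω z ^ 2 ≤ ω z := by nlinarith
          have h2 := Real.sqrt_le_sqrt h1
          rwa [Real.sqrt_sq hωp.le] at h2
        have hfac : 0 ≤ (1 - ω z) * (2 * ω z - 1) := by nlinarith
        nlinarith [mul_le_mul_of_nonneg_left hsq hs2.le]
    have := hGmono (mem_Iic.mpr hx) (mem_Iic.mpr le_rfl) hx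
    simp only at this
    have hF := h.Fpos x
    nlinarith
  · have h1 : g ω x ≤ g ω 0 := h.g_anti hx.le
    have hF := h.Fpos 0
    nlinarith

lemma Hyp.g_bdd (h : Hyp ω) : BddAbove (range (g ω)) :=
  ⟨g ω 0 + 2 * Real.sqrt 2 * F ω 0, by rintro _ ⟨x, rfl⟩; exact h.g_le x⟩

lemma Hyp.g_tendsto (h : Hyp ω) : Tendsto (g ω) atBot (nhds (⨆ x, g ω x)) :=
  tendsto_atBot_ciSup h.g_anti h.g_bdd

lemma Hyp.negV_eq (h : Hyp ω) (z : ℝ) :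
    -V ω z = Real.exp (g ω z + Real.sqrt 2 * z) := by
  have hb : 0 < -V ω z := by linarith [h.Vneg z]
  have : g ω z + Real.sqrt 2 * z = Real.log (-V ω z) := by unfold g; ring
  rw [this, Real.exp_log hb]

lemma integrableOn_exp_mul_Iic (a y : ℝ) (ha : 0 < a) :
    IntegrableOn (fun z => Real.exp (a * z)) (Iic y) := by
  have hI := exp_neg_integrableOn_Ioi (-y) ha
  have m : MeasurableEmbedding fun x : ℝ => -x :=
    (Homeomorph.neg ℝ).measurableEmbedding
  unfold IntegrableOn
  rw [← Measure.map_neg_eq_self (volume : Measure ℝ)]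
  rw [m.restrict_map, m.integrable_map_iff]
  have h2 : IntegrableOn (fun x => Real.exp (-a * x)) (Ici (-y)) :=
    Iff.mpr integrableOn_Ici_iff_integrableOn_Ioi hI
  have hpre : (fun x : ℝ => -x) ⁻¹' Iic y = Ici (-y) := by
    ext t; simp [neg_le]
  rw [hpre]
  have : ((fun z => Real.exp (a * z)) ∘ fun x : ℝ => -x) = fun x => Real.exp (-a * x) := by
    funext t; simp [Function.comp, mul_neg, neg_mul]
  rw [this]
  exact h2

end Stmt18Aux

open Stmt18Aux

theorem stmt_18
    (ω : ℝ → ℝ)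
    (hω_smooth : ContDiff ℝ 2 ω)
    (hω_eq : ∀ x, deriv (deriv ω) x + 2 * deriv ω x + ω x - (ω x) ^ 2 = 0)
    (hω_bot : Tendsto ω atBot (nhds 1))
    (hω_top : Tendsto ω atTop (nhds 0))
    (hω_half : ω 0 = 1 / 2)
    (hω_deriv : ∀ x, deriv ω x < 0)
    :
    (∀ x, deriv (deriv (fun y => deriv ω y * Real.exp y)) x
        - 2 * ω x * (deriv ω x * Real.exp x) = 0) ∧
    (∃ C : ℝ, C ≠ 0 ∧
      Tendsto (fun x => deriv ω x * Real.exp x * Real.exp (-(Real.sqrt 2 * x)))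
        atBot (nhds C)) ∧
    (∀ y : ℝ, IntegrableOn (fun z => (deriv ω z) ^ 2 * Real.exp (2 * z)) (Set.Iic y)) := by
  have h : Hyp ω := ⟨hω_smooth, hω_eq, hω_bot, hω_top, hω_half, hω_deriv⟩
  refine ⟨fun x => by rw [h.part1 x]; ring, ?_, ?_⟩
  · refine ⟨-Real.exp (⨆ x, g ω x), neg_ne_zero.mpr (Real.exp_ne_zero _), ?_⟩
    have hfun : (fun x => deriv ω x * Real.exp x * Real.exp (-(Real.sqrt 2 * x)))
        = fun x => -Real.exp (g ω x) := by
      funext x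
      have h1 : deriv ω x * Real.exp x = V ω x := rfl
      have h2 : V ω x = -Real.exp (g ω x + Real.sqrt 2 * x) := by
        have := h.negV_eq x
        linarith
      rw [h1, h2, neg_mul, ← Real.exp_add, neg_inj]
      congr 1
      ring
    rw [hfun]
    exact ((Real.continuous_exp.tendsto _).comp h.g_tendsto).neg
  · intro y
    set B := g ω 0 + 2 * Real.sqrt 2 * F ω 0 with hB
    have hs2 : (0:ℝ) < Real.sqrt 2 := Real.sqrt_pos.mpr (by norm_num)
    have hInt : IntegrableOn (fun z => Real.exp (2*B) * Real.exp (2*Real.sqrt 2*z)) (Iic y) :=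
      (integrableOn_exp_mul_Iic (2*Real.sqrt 2) y (by positivity)).const_mul _
    have hcont : Continuous (fun z => (deriv ω z) ^ 2 * Real.exp (2 * z)) :=
      (h.dom'.continuous.pow 2).mul
        (Real.continuous_exp.comp (continuous_const.mul continuous_id))
    apply Integrable.mono' hInt hcont.aestronglyMeasurable
    apply ae_of_all
    intro z
    have hV2 : (deriv ω z) ^ 2 * Real.exp (2 * z) = (-V ω z) ^ 2 := by
      have he : Real.exp (2*z) = Real.exp z * Real.exp z := by
        rw [← Real.exp_add]; ring_nf
      unfold V
      rw [he]
      ring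
    have hb : (deriv ω z) ^ 2 * Real.exp (2 * z) ≤ Real.exp (2*B) * Real.exp (2*Real.sqrt 2*z) := by
      rw [hV2, h.negV_eq z, sq, ← Real.exp_add, ← Real.exp_add]
      apply Real.exp_le_exp.mpr
      have := h.g_le z
      rw [← hB] at this
      linarith
    have hnn : 0 ≤ (deriv ω z) ^ 2 * Real.exp (2 * z) := by positivity
    rw [Real.norm_eq_abs, abs_of_nonneg hnn]
    exact hb
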